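/- For n ≥ 2, the number of labeled trees on {1,...,n} in which vertex 1 has degree k equals C(n-2, k-1) · (n-1)^(n-1-k), for each 1 ≤ k ≤ n-1. -/

import Mathlib

set_option linter.unusedSectionVars false
open SimpleGraph Walk
variable {V : Type*} [DecidableEq V] {G T : SimpleGraph V}
namespace CayleyAux


/-- first edge of a walk between distinct vertices -/
lemma first_edge_mem {u v : V} (p : G.Walk u v) (h : u ≠ v) :
    G.Adj u (p.getVert 1) ∧ s(u, p.getVert 1) ∈ p.edges := by
  cases p with
  | nil => exact absurd rfl h
  | cons hadj q =>
    rw [Walk.getVert_cons_succ, Walk.getVert_zero]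
    exact ⟨hadj, by simp⟩

/-- in a path, the only edge containing the initial vertex is the first edge -/
lemma edge_of_head_mem {u v : V} (p : G.Walk u v) (hp : p.IsPath) {e : Sym2 V}
    (he : e ∈ p.edges) (hu : u ∈ e) : e = s(u, p.getVert 1) := by
  induction e using Sym2.ind with
  | _ x y =>
    cases p with
    | nil => simp at he
    | cons hadj q =>
      rw [Walk.getVert_cons_succ, Walk.getVert_zero]
      rw [Walk.edges_cons, List.mem_cons] at he
      rcases he with he | he
      · exact he
      · exfalso
        rw [Walk.cons_isPath_iff] at hp
        rcases Sym2.mem_iff.mp hu with rfl | rfl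
        · exact hp.2 (Walk.fst_mem_support_of_mem_edges q he)
        · exact hp.2 (Walk.snd_mem_support_of_mem_edges q he)

lemma reach_endpoint_aux {a b : V} : ∀ {v w : V} (_ : G.Walk v w),
    ((G.deleteEdges {s(a, b)}).Reachable w a ∨ (G.deleteEdges {s(a, b)}).Reachable w b) →
    ((G.deleteEdges {s(a, b)}).Reachable v a ∨ (G.deleteEdges {s(a, b)}).Reachable v b) := by
  intro v w p
  induction p with
  | nil => exact id
  | @cons u u' w' hadj q ih =>
    intro hw
    rcases ih hw with hr | hr
    · by_cases he : s(u, u') = s(a, b)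
      · rw [Sym2.eq_iff] at he
        rcases he with ⟨rfl, rfl⟩ | ⟨rfl, rfl⟩
        · exact Or.inl (Reachable.refl _)
        · exact Or.inr (Reachable.refl _)
      · exact Or.inl ((Adj.reachable (by simp [hadj, he])).trans hr)
    · by_cases he : s(u, u') = s(a, b)
      · rw [Sym2.eq_iff] at he
        rcases he with ⟨rfl, rfl⟩ | ⟨rfl, rfl⟩
        · exact Or.inl (Reachable.refl _)
        · exact Or.inr (Reachable.refl _)
      · exact Or.inr ((Adj.reachable (by simp [hadj, he])).trans hr)

/-- every vertex reaches one of the two endpoints of an edge after deleting it -/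
lemma reach_endpoint {a b : V} (hconn : G.Connected) (v : V) :
    (G.deleteEdges {s(a, b)}).Reachable v a ∨ (G.deleteEdges {s(a, b)}).Reachable v b := by
  obtain ⟨p⟩ := hconn.preconnected v a
  exact reach_endpoint_aux p (Or.inl (Reachable.refl _))

/-- deleting an edge of a tree disconnects its endpoints -/
lemma tree_not_reach {a b : V} (hT : T.IsTree) (hab : T.Adj a b) :
    ¬ (T.deleteEdges {s(a, b)}).Reachable a b := by
  have hb := isAcyclic_iff_forall_adj_isBridge.mp hT.2 hab
  exact hb


noncomputable def thePath (hT : T.IsTree) (u v : V) : T.Walk u v :=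
  (hT.existsUnique_path u v).choose

lemma thePath_isPath (hT : T.IsTree) (u v : V) : (thePath hT u v).IsPath :=
  (hT.existsUnique_path u v).choose_spec.1

lemma thePath_unique (hT : T.IsTree) {u v : V} (p : T.Walk u v) (hp : p.IsPath) :
    p = thePath hT u v :=
  (hT.existsUnique_path u v).choose_spec.2 p hp

/-- next vertex on the unique path from `u` to `v` -/
noncomputable def nxt (hT : T.IsTree) (u v : V) : V := (thePath hT u v).getVert 1

lemma nxt_adj (hT : T.IsTree) {u v : V} (h : u ≠ v) : T.Adj u (nxt hT u v) :=
  (first_edge_mem (thePath hT u v) h).1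

lemma nxt_edge_mem (hT : T.IsTree) {u v : V} (h : u ≠ v) :
    s(u, nxt hT u v) ∈ (thePath hT u v).edges :=
  (first_edge_mem (thePath hT u v) h).2

/-- deleting the first edge of the unique `u v`-path disconnects `u` from `v` -/
lemma not_reach_del_nxt (hT : T.IsTree) {u v : V} (h : u ≠ v) :
    ¬ (T.deleteEdges {s(u, nxt hT u v)}).Reachable u v := by
  rintro ⟨w⟩
  set e := s(u, nxt hT u v) with he
  have hsub : ∀ f ∈ (w.toPath : T.deleteEdges {e}|>.Walk u v).edges, f ∈ T.edgeSet := by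
    intro f hf
    have := Walk.edges_subset_edgeSet _ hf
    rw [edgeSet_deleteEdges] at this
    exact this.1
  have hnot : e ∉ (w.toPath : T.deleteEdges {e}|>.Walk u v).edges := by
    intro hf
    have := Walk.edges_subset_edgeSet _ hf
    rw [edgeSet_deleteEdges] at this
    exact this.2 rfl
  set p := ((w.toPath : T.deleteEdges {e}|>.Walk u v) : _).transfer T hsub with hp
  have hpath : p.IsPath := (Walk.IsPath.transfer hsub (w.toPath.isPath))
  have := thePath_unique hT p hpath
  have hmem : e ∈ p.edges := by
    rw [this]; exact nxt_edge_mem hT h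
  rw [hp, Walk.edges_transfer] at hmem
  exact hnot hmem

/-- deleting any other edge at `u` keeps `v` reachable from `u` -/
lemma reach_del_of_ne (hT : T.IsTree) {u v y : V} (h : u ≠ v) (hy : y ≠ nxt hT u v) :
    (T.deleteEdges {s(u, y)}).Reachable u v := by
  have hnot : s(u, y) ∉ (thePath hT u v).edges := by
    intro hmem
    have := edge_of_head_mem (thePath hT u v) (thePath_isPath hT u v) hmem
      (by rw [Sym2.mem_iff]; exact Or.inl rfl)
    rw [Sym2.eq_iff] at this
    rcases this with ⟨-, h2⟩ | ⟨h1, h2⟩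
    · exact hy h2
    · -- u = nxt and y = u : then s(u,y) has u = y; edge in path: adjacency irrefl
      have hadj := nxt_adj hT h
      rw [nxt, ← h1] at hadj
      exact T.irrefl hadj
  exact ⟨(thePath hT u v).toDeleteEdges {s(u, y)} (fun e' he' heq => hnot (by rw [Set.mem_singleton_iff] at heq; exact heq ▸ he'))⟩

lemma nxt_eq_of_adj (hT : T.IsTree) {u v : V} (h : T.Adj u v) : nxt hT u v = v := by
  have hp : (Walk.cons h Walk.nil).IsPath := by simp [h.ne]
  have := thePath_unique hT _ hp
  rw [nxt, ← this]
  simp [Walk.getVert_cons_succ]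

lemma adj_of_nxt_eq (hT : T.IsTree) {u v : V} (h : u ≠ v) (he : nxt hT u v = v) :
    T.Adj u v := he ▸ nxt_adj hT h

/-- uniqueness of the parent: if `x~v` and deleting that edge disconnects `r` from `v`,
then `x` is the next vertex from `v` toward `r`. -/
lemma eq_nxt_of_not_reach (hT : T.IsTree) {r v x : V} (h : v ≠ r) (hx : T.Adj x v)
    (hr : ¬ (T.deleteEdges {s(x, v)}).Reachable r v) : x = nxt hT v r := by
  by_contra hne
  have := reach_del_of_ne hT h hne
  rw [Sym2.eq_swap] at hr
  exact hr this.symm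

section Swap
variable {a b x y : V}

/-- the deleted graph has no edge between the far sides -/
lemma H_not_adj (hT : T.IsTree) (hab : T.Adj a b)
    (hxa : (T.deleteEdges {s(a, b)}).Reachable x a)
    (hyb : (T.deleteEdges {s(a, b)}).Reachable y b) :
    ¬ (T.deleteEdges {s(a, b)}).Adj x y := by
  intro h
  exact tree_not_reach hT hab (hxa.symm.trans ((Adj.reachable h).trans hyb)).symm.symm

lemma del_sup_edge_del (hxy : x ≠ y) (hH : ¬ (G.deleteEdges {s(a,b)}).Adj x y) :
    ((G.deleteEdges {s(a,b)}) ⊔ edge x y).deleteEdges {s(x,y)} = G.deleteEdges {s(a,b)} := by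
  ext u w
  simp only [deleteEdges_adj, sup_adj, edge_adj, Set.mem_singleton_iff]
  constructor
  · rintro ⟨h1 | h2, hne⟩
    · exact h1
    · exfalso
      rcases h2.1 with ⟨rfl, rfl⟩ | ⟨rfl, rfl⟩
      · exact hne rfl
      · exact hne (Sym2.eq_swap)
  · intro h
    refine ⟨Or.inl h, ?_⟩
    intro he
    rw [Sym2.eq_iff] at he
    rcases he with ⟨rfl, rfl⟩ | ⟨rfl, rfl⟩
    · exact hH ((deleteEdges_adj).mpr h)
    · exact hH ((deleteEdges_adj).mpr h).symm

/-- restoring a deleted edge -/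
lemma del_sup_edge_self (hab : G.Adj a b) : (G.deleteEdges {s(a,b)}) ⊔ edge a b = G := by
  ext u w
  simp only [sup_adj, deleteEdges_adj, edge_adj, Set.mem_singleton_iff]
  constructor
  · rintro (⟨h, -⟩ | ⟨⟨rfl, rfl⟩ | ⟨rfl, rfl⟩, -⟩)
    · exact h
    · exact hab
    · exact hab.symm
  · intro h
    by_cases he : s(u, w) = s(a, b)
    · rw [Sym2.eq_iff] at he
      rcases he with ⟨rfl, rfl⟩ | ⟨rfl, rfl⟩
      · exact Or.inr ⟨Or.inl ⟨rfl, rfl⟩, h.ne⟩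
      · exact Or.inr ⟨Or.inr ⟨rfl, rfl⟩, h.ne⟩
    · exact Or.inl ⟨h, he⟩

/-- the swap lemma: removing edge {a,b} from a tree and adding edge {x,y},
where x is on a's side and y on b's side, yields a tree. -/
lemma swap_isTree (hT : T.IsTree) (hab : T.Adj a b)
    (hxa : (T.deleteEdges {s(a, b)}).Reachable x a)
    (hyb : (T.deleteEdges {s(a, b)}).Reachable y b)
    (hxy : x ≠ y) :
    ((T.deleteEdges {s(a,b)}) ⊔ edge x y).IsTree := by
  set H := T.deleteEdges {s(a,b)} with hH
  have hnadj : ¬ H.Adj x y := H_not_adj hT hab hxa hyb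
  have hGadj : (H ⊔ edge x y).Adj x y := by
    rw [sup_adj, edge_adj]
    exact Or.inr ⟨Or.inl ⟨rfl, rfl⟩, hxy⟩
  have hbridge : ¬ ((H ⊔ edge x y).deleteEdges {s(x,y)}).Reachable x y := by
    rw [del_sup_edge_del hxy hnadj]
    intro hr
    exact tree_not_reach hT hab (hxa.symm.trans (hr.trans hyb)).symm.symm
  constructor
  · -- connected
    have hne : Nonempty V := hT.isConnected.nonempty
    refine ⟨fun u w => ?_⟩
    have key : ∀ v : V, (H ⊔ edge x y).Reachable v a := by
      intro v
      rcases reach_endpoint (a := a) (b := b) hT.isConnected v with hr | hr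
      · exact hr.mono le_sup_left
      · refine (hr.mono le_sup_left).trans ?_
        refine (hyb.symm.mono le_sup_left).trans ?_
        exact ((Adj.reachable hGadj.symm).trans (hxa.mono le_sup_left))
    exact (key u).trans (key w).symm
  · -- acyclic
    intro v c hc
    by_cases hmem : s(x, y) ∈ c.edges
    · have hbr : (H ⊔ edge x y).IsBridge s(x, y) := by
        rw [isBridge_iff_forall_cycle_notMem hGadj]
        refine fun u p hp => ?_
        intro hmem'
        apply hbridge
        have := (adj_and_reachable_delete_edges_iff_exists_cycle (G := H ⊔ edge x y)).mpr
          ⟨u, p, hp, hmem'⟩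
        exact this.2
      rw [isBridge_iff_forall_cycle_notMem hGadj] at hbr
      exact hbr c hc hmem
    · -- transfer cycle into H then to T
      have hsub : ∀ e ∈ c.edges, e ∈ H.edgeSet := by
        intro e he
        have h1 := Walk.edges_subset_edgeSet c he
        rw [edgeSet_sup, edge_edgeSet_of_ne hxy] at h1
        rcases h1 with h1 | h1
        · exact h1
        · exact absurd (Set.mem_singleton_iff.mp h1 ▸ he) hmem
      set c' := c.transfer H hsub with hc'
      have hcyc : c'.IsCycle := by
        rw [Walk.isCycle_def] at hc ⊢
        refine ⟨?_, ?_, ?_⟩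
        · rw [Walk.isTrail_def, hc', Walk.edges_transfer]
          exact hc.1.edges_nodup
        · cases c with
          | nil => exact absurd rfl hc.2.1
          | cons h q => simp [hc', Walk.transfer]; exact Walk.not_nil_cons
        · rw [hc', Walk.support_transfer]
          exact hc.2.2
      have : ((c'.mapLe (deleteEdges_le _ : H ≤ T))).IsCycle :=
        (Walk.mapLe_isCycle (deleteEdges_le _)).mpr hcyc
      exact hT.2 _ this

end Swap

/-- generic equivalence splitting a subtype of a product into a sigma type -/
def subtypeProdEquivSigma {α β : Type*} {P : α → Prop} {Q : α → β → Prop} :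
    {p : α × β // P p.1 ∧ Q p.1 p.2} ≃ Σ a : {a // P a}, {b // Q a.1 b} where
  toFun := fun ⟨(a, b), h⟩ => ⟨⟨a, h.1⟩, ⟨b, h.2⟩⟩
  invFun := fun ⟨⟨a, ha⟩, ⟨b, hb⟩⟩ => ⟨(a, b), ha, hb⟩
  left_inv := fun ⟨(a, b), h⟩ => rfl
  right_inv := fun ⟨⟨a, ha⟩, ⟨b, hb⟩⟩ => rfl

lemma nat_card_sigma_const {ι : Type*} [Finite ι] {F : ι → Type*} [∀ i, Finite (F i)]
    (c : ℕ) (h : ∀ i, Nat.card (F i) = c) : Nat.card (Σ i, F i) = Nat.card ι * c := by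
  cases nonempty_fintype ι
  haveI : ∀ i, Fintype (F i) := fun i => Fintype.ofFinite _
  rw [Nat.card_eq_fintype_card, Fintype.card_sigma]
  have : ∀ i : ι, Fintype.card (F i) = c := fun i => by
    rw [← Nat.card_eq_fintype_card, h]
  simp only [this, Finset.sum_const, Finset.card_univ, smul_eq_mul]
  rw [Nat.card_eq_fintype_card]

section Counting

variable [Fintype V] {r : V}

/-- the degree of `r` as a `Nat.card` -/
noncomputable def dg (G : SimpleGraph V) (r : V) : ℕ := Nat.card {w // G.Adj r w}

lemma dg_eq_ncard (G : SimpleGraph V) (r : V) : dg G r = {w | G.Adj r w}.ncard := by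
  rw [dg, ← Nat.card_coe_set_eq]
  rfl

/-- counting the pairs attached to a tree in the `A`-side -/
lemma factA {T : SimpleGraph V} (hT : T.IsTree) {k : ℕ} (hdeg : dg T r = k) :
    Nat.card {q : V × V // T.Adj q.1 q.2 ∧ q.1 ≠ r ∧
      ¬ (T.deleteEdges {s(q.1, q.2)}).Reachable r q.2} = Fintype.card V - 1 - k := by
  have e1 : {q : V × V // T.Adj q.1 q.2 ∧ q.1 ≠ r ∧
      ¬ (T.deleteEdges {s(q.1, q.2)}).Reachable r q.2} ≃
      {y : V // y ≠ r ∧ ¬ T.Adj r y} := by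
    refine Equiv.mk
      (fun q => ⟨q.1.2, ?_, ?_⟩)
      (fun y => ⟨(nxt hT y.1 r, y.1), (nxt_adj hT y.2.1).symm, ?_, ?_⟩)
      ?_ ?_
    · rintro hy
      exact q.2.2.2 (by rw [hy])
    · intro hadj'
      have hyr : q.1.2 ≠ r := fun hy => q.2.2.2 (by rw [hy])
      exact q.2.2.1 ((eq_nxt_of_not_reach hT hyr q.2.1 q.2.2.2).trans
        (nxt_eq_of_adj hT hadj'.symm))
    · intro h; exact y.2.2 (adj_of_nxt_eq hT y.2.1 h).symm
    · rw [Sym2.eq_swap]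
      intro h
      exact (not_reach_del_nxt hT y.2.1) h.symm
    · rintro ⟨⟨x, y⟩, hadj, hxr, hnr⟩
      have hyr : y ≠ r := by rintro rfl; exact hnr (Reachable.refl _)
      have hx : x = nxt hT y r := eq_nxt_of_not_reach hT hyr hadj hnr
      apply Subtype.ext
      show (nxt hT y r, y) = (x, y)
      rw [hx]
    · rintro ⟨y, hyr, hnadj⟩
      rfl
  rw [Nat.card_congr e1]
  have hset : {y : V | y ≠ r ∧ ¬ T.Adj r y} = (insert r {w | T.Adj r w})ᶜ := by
    ext w
    simp only [Set.mem_setOf_eq, Set.mem_compl_iff, Set.mem_insert_iff, not_or]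
  have hcard : Nat.card {y : V // y ≠ r ∧ ¬ T.Adj r y}
      = {y : V | y ≠ r ∧ ¬ T.Adj r y}.ncard := by
    rw [← Nat.card_coe_set_eq]; rfl
  rw [hcard, hset]
  have h1 : (insert r {w | T.Adj r w}).ncard + (insert r {w | T.Adj r w})ᶜ.ncard
      = Nat.card V := Set.ncard_add_ncard_compl _ (Set.toFinite _)
  have h2 : (insert r {w | T.Adj r w}).ncard = k + 1 := by
    rw [Set.ncard_insert_of_notMem (by simp) (Set.toFinite _)]
    rw [← dg_eq_ncard, hdeg]
  rw [h2, Nat.card_eq_fintype_card] at h1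
  omega

/-- counting the pairs attached to a tree in the `B`-side -/
lemma factB {T : SimpleGraph V} (hT : T.IsTree) {k : ℕ} (hdeg : dg T r = k + 1) :
    Nat.card {q : V × V // T.Adj r q.1 ∧ q.2 ≠ r ∧
      (T.deleteEdges {s(r, q.1)}).Reachable r q.2} = (Fintype.card V - 1) * k := by
  have e2 : {q : V × V // T.Adj r q.1 ∧ q.2 ≠ r ∧
      (T.deleteEdges {s(r, q.1)}).Reachable r q.2} ≃
      Σ x : {x : V // x ≠ r}, {y : V // T.Adj r y ∧ y ≠ nxt hT r x.1} :=
    { toFun := fun q => ⟨⟨q.1.2, q.2.2.1⟩, ⟨q.1.1, q.2.1, by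
        intro hyeq
        have h3 := q.2.2.2
        rw [hyeq] at h3
        exact (not_reach_del_nxt hT (Ne.symm q.2.2.1)) h3⟩⟩
      invFun := fun p => ⟨(p.2.1, p.1.1), p.2.2.1, p.1.2,
        reach_del_of_ne hT (Ne.symm p.1.2) p.2.2.2⟩
      left_inv := fun ⟨⟨y, x⟩, h1, h2, h3⟩ => rfl
      right_inv := fun ⟨⟨x, hx⟩, ⟨y, h1, h2⟩⟩ => rfl }
  rw [Nat.card_congr e2]
  have : Nat.card {x : V // x ≠ r} = Fintype.card V - 1 := by
    rw [Nat.card_eq_fintype_card, Fintype.card_subtype_compl, Fintype.card_subtype_eq]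
  rw [nat_card_sigma_const k, this]
  intro x
  have hadj : T.Adj r (nxt hT r x.1) := nxt_adj hT (Ne.symm x.2)
  have hset : {y : V | T.Adj r y ∧ y ≠ nxt hT r x.1}
      = {y : V | T.Adj r y} \ {nxt hT r x.1} := by
    ext w; simp [Set.mem_diff]
  have : Nat.card {y : V // T.Adj r y ∧ y ≠ nxt hT r x.1}
      = {y : V | T.Adj r y ∧ y ≠ nxt hT r x.1}.ncard := by
    rw [← Nat.card_coe_set_eq]; rfl
  have hmem : nxt hT r x.1 ∈ {y : V | T.Adj r y} := hadj
  rw [this, hset, Set.ncard_diff_singleton_of_mem hmem,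
    ← dg_eq_ncard, hdeg]
  omega

end Counting

section Star

variable {r : V}

/-- the star graph centered at `r` -/
def star (r : V) : SimpleGraph V := fromRel (fun u _ => u = r)

lemma star_adj {u w : V} : (star r).Adj u w ↔ u ≠ w ∧ (u = r ∨ w = r) := by
  simp [star, fromRel_adj]

lemma star_isolated {w u : V} (hw : w ≠ r) (hu : u ≠ w) :
    ¬ ((star r).deleteEdges {s(r, w)}).Reachable w u := by
  rintro ⟨p⟩
  cases p with
  | nil => exact hu rfl
  | @cons _ z _ h q =>
    rw [deleteEdges_adj, Set.mem_singleton_iff] at h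
    obtain ⟨hadj, hne⟩ := h
    rw [star_adj] at hadj
    rcases hadj.2 with rfl | rfl
    · exact hw rfl
    · exact hne (Sym2.eq_swap)

lemma star_isTree [Fintype V] : (star r).IsTree := by
  haveI : Nonempty V := ⟨r⟩
  constructor
  · refine ⟨fun u w => ?_⟩
    have key : ∀ v : V, (star r).Reachable v r := by
      intro v
      by_cases hv : v = r
      · exact hv ▸ Reachable.refl _
      · exact Adj.reachable (star_adj.mpr ⟨hv, Or.inr rfl⟩)
    exact (key u).trans (key w).symm
  · rw [isAcyclic_iff_forall_adj_isBridge]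
    intro u w hadj
    have hadj' := hadj
    rw [star_adj] at hadj'
    rw [isBridge_iff]
    rcases hadj'.2 with h | h
    · intro hr
      have hwr : w ≠ r := fun hwr => hadj'.1 (h.trans hwr.symm)
      rw [h] at hr
      exact star_isolated hwr (Ne.symm hwr) hr.symm
    · intro hr
      have hur : u ≠ r := fun h2 => hadj'.1 (h2.trans h.symm)
      rw [h, show s(u, r) = s(r, u) from Sym2.eq_swap] at hr
      exact star_isolated hur (Ne.symm hur) hr
  
lemma star_dg [Fintype V] : dg (star r) r = Fintype.card V - 1 := by
  rw [dg_eq_ncard]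
  have hset : {w | (star r).Adj r w} = ({r} : Set V)ᶜ := by
    ext w
    constructor
    · intro h
      have h' := star_adj.mp h
      exact fun hc => h'.1 (Set.mem_singleton_iff.mp hc).symm
    · intro h
      exact star_adj.mpr ⟨fun hc => h (Set.mem_singleton_iff.mpr hc.symm), Or.inl rfl⟩
  rw [hset]
  have h1 := Set.ncard_add_ncard_compl ({r} : Set V) (Set.toFinite _)
  rw [Set.ncard_singleton, Nat.card_eq_fintype_card] at h1
  omega

lemma tree_deg_max_eq_star [Fintype V] {T : SimpleGraph V} (hT : T.IsTree)
    (hdeg : dg T r = Fintype.card V - 1) : T = star r := by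
  have hnr : ∀ w : V, w ≠ r → T.Adj r w := by
    have hsub : {w | T.Adj r w} ⊆ ({r} : Set V)ᶜ := by
      intro w hw
      simp only [Set.mem_compl_iff, Set.mem_singleton_iff]
      exact fun h => T.irrefl (h ▸ hw)
    have h1 := Set.ncard_add_ncard_compl ({r} : Set V) (Set.toFinite _)
    rw [Set.ncard_singleton, Nat.card_eq_fintype_card] at h1
    have heq : {w | T.Adj r w} = ({r} : Set V)ᶜ := by
      apply Set.eq_of_subset_of_ncard_le hsub _ (Set.toFinite _)
      rw [← dg_eq_ncard, hdeg]
      omega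
    intro w hw
    have : w ∈ ({r} : Set V)ᶜ := by simpa using hw
    rw [← heq] at this
    exact this
  have hno : ∀ u w : V, u ≠ r → w ≠ r → ¬ T.Adj u w := by
    intro u w hu hw hadj
    have huw : u ≠ w := hadj.ne
    apply hT.2 (Walk.cons (hnr u hu) (Walk.cons hadj (Walk.cons ((hnr w hw).symm) Walk.nil)))
    rw [Walk.isCycle_def, Walk.isTrail_def]
    refine ⟨?_, by simp, ?_⟩
    · simp only [Walk.edges_cons, Walk.edges_nil, List.nodup_cons, List.mem_cons,
        List.not_mem_nil, or_false, List.mem_singleton, List.nodup_nil, and_true,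
        Sym2.eq_iff, not_or]
      exact ⟨⟨⟨fun h => hu h.1.symm, fun h => hw h.symm⟩,
        ⟨fun h => hw h.1.symm, fun h => huw h.2⟩⟩, ⟨fun h => hw h.2, hu⟩, not_false⟩
    · simp only [Walk.support_cons, Walk.support_nil, List.tail_cons]
      simp [huw, hu, hw]
  ext u w
  rw [star_adj]
  constructor
  · intro hadj
    refine ⟨hadj.ne, ?_⟩
    by_contra hcon
    push_neg at hcon
    exact hno u w hcon.1 hcon.2 hadj
  · rintro ⟨hne, rfl | rfl⟩
    · exact (hnr w (Ne.symm hne))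
    · exact (hnr u hne).symm

lemma base_count [Fintype V] (r : V) :
    Nat.card {G : SimpleGraph V // G.IsTree ∧ dg G r = Fintype.card V - 1} = 1 := by
  haveI : Unique {G : SimpleGraph V // G.IsTree ∧ dg G r = Fintype.card V - 1} :=
    { default := ⟨star r, star_isTree, star_dg⟩
      uniq := fun ⟨G, h1, h2⟩ => Subtype.ext (tree_deg_max_eq_star h1 h2) }
  exact Nat.card_unique

end Star

section Recurrence

variable [Fintype V] {r : V}

lemma sup_edge_adj_of_ne {G : SimpleGraph V} {x y w : V} (hrx : r ≠ x) (hry : r ≠ y) :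
    (G ⊔ edge x y).Adj r w ↔ G.Adj r w := by
  rw [sup_adj, edge_adj]
  constructor
  · rintro (h | ⟨⟨rfl, rfl⟩ | ⟨rfl, rfl⟩, -⟩)
    · exact h
    · exact absurd rfl hrx
    · exact absurd rfl hry
  · exact Or.inl

lemma del_edge_at_r_adj {G : SimpleGraph V} {b w : V} (hrb : r ≠ b) :
    (G.deleteEdges {s(r, b)}).Adj r w ↔ G.Adj r w ∧ w ≠ b := by
  rw [deleteEdges_adj, Set.mem_singleton_iff]
  constructor
  · rintro ⟨h, hne⟩
    refine ⟨h, fun hwb => hne ?_⟩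
    rw [hwb]
  · rintro ⟨h, hwb⟩
    refine ⟨h, fun he => ?_⟩
    rw [Sym2.eq_iff] at he
    rcases he with ⟨-, h2⟩ | ⟨h1, -⟩
    · exact hwb h2
    · exact hrb h1

lemma del_edge_not_at_r_adj {G : SimpleGraph V} {x y w : V} (hrx : r ≠ x) (hry : r ≠ y) :
    (G.deleteEdges {s(x, y)}).Adj r w ↔ G.Adj r w := by
  rw [deleteEdges_adj, Set.mem_singleton_iff]
  constructor
  · exact fun h => h.1
  · intro h
    refine ⟨h, fun he => ?_⟩
    rw [Sym2.eq_iff] at he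
    rcases he with ⟨h1, -⟩ | ⟨h1, -⟩
    · exact hrx h1
    · exact hry h1

/-- the property defining the `A`-side pairs -/
abbrev QA (r : V) (k : ℕ) (p : SimpleGraph V × (V × V)) : Prop :=
  (p.1.IsTree ∧ dg p.1 r = k) ∧ p.1.Adj p.2.1 p.2.2 ∧ p.2.1 ≠ r ∧
    ¬ (p.1.deleteEdges {s(p.2.1, p.2.2)}).Reachable r p.2.2

/-- the property defining the `B`-side pairs -/
abbrev QB (r : V) (k : ℕ) (p : SimpleGraph V × (V × V)) : Prop :=
  (p.1.IsTree ∧ dg p.1 r = k + 1) ∧ p.1.Adj r p.2.1 ∧ p.2.2 ≠ r ∧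
    (p.1.deleteEdges {s(r, p.2.1)}).Reachable r p.2.2

noncomputable def fwd (k : ℕ) : {p : SimpleGraph V × (V × V) // QB r k p} →
    {p : SimpleGraph V × (V × V) // QA r k p}
  | ⟨(T, (y, x)), h⟩ => ⟨((T.deleteEdges {s(r, y)}) ⊔ edge x y, (x, y)), by
      obtain ⟨⟨hT, hdeg⟩, hadj, hx, hreach⟩ := h
      have hry : r ≠ y := hadj.ne
      have hrx : r ≠ x := Ne.symm hx
      have hbridge : ¬ (T.deleteEdges {s(r, y)}).Reachable r y := tree_not_reach hT hadj
      have hxy : x ≠ y := by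
        rintro rfl
        exact hbridge hreach
      have htree : ((T.deleteEdges {s(r, y)}) ⊔ edge x y).IsTree :=
        swap_isTree hT hadj hreach.symm (Reachable.refl y) hxy
      have hnadjH : ¬ (T.deleteEdges {s(r, y)}).Adj x y :=
        H_not_adj hT hadj hreach.symm (Reachable.refl y)
      have hdel : ((T.deleteEdges {s(r, y)}) ⊔ edge x y).deleteEdges {s(x, y)}
          = T.deleteEdges {s(r, y)} := del_sup_edge_del hxy hnadjH
      refine ⟨⟨htree, ?_⟩, ?_, hx, ?_⟩
      · -- degree drops by one
        have hNset : {w | ((T.deleteEdges {s(r, y)}) ⊔ edge x y).Adj r w}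
            = {w | T.Adj r w} \ {y} := by
          ext w
          rw [Set.mem_setOf_eq, sup_edge_adj_of_ne hrx hry, del_edge_at_r_adj hry]
          simp [Set.mem_diff]
        have hmem : y ∈ {w | T.Adj r w} := hadj
        rw [dg_eq_ncard, hNset, Set.ncard_diff_singleton_of_mem hmem,
          ← dg_eq_ncard, hdeg]
        omega
      · rw [sup_adj, edge_adj]
        exact Or.inr ⟨Or.inl ⟨rfl, rfl⟩, hxy⟩
      · rw [hdel]
        exact hbridge⟩

noncomputable def bwd (k : ℕ) : {p : SimpleGraph V × (V × V) // QA r k p} →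
    {p : SimpleGraph V × (V × V) // QB r k p}
  | ⟨(T', (x, y)), h⟩ => ⟨((T'.deleteEdges {s(x, y)}) ⊔ edge r y, (y, x)), by
      obtain ⟨⟨hT', hdeg'⟩, hadj', hx, hnr⟩ := h
      have hry : r ≠ y := by
        rintro rfl
        exact hnr (Reachable.refl r)
      have hrx : r ≠ x := Ne.symm hx
      have hrX : (T'.deleteEdges {s(x, y)}).Reachable r x :=
        (reach_endpoint hT'.isConnected r).resolve_right hnr
      have htree : ((T'.deleteEdges {s(x, y)}) ⊔ edge r y).IsTree :=
        swap_isTree hT' hadj' hrX (Reachable.refl y) hry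
      have hnadjH : ¬ (T'.deleteEdges {s(x, y)}).Adj r y := fun h => hnr h.reachable
      have hdel : ((T'.deleteEdges {s(x, y)}) ⊔ edge r y).deleteEdges {s(r, y)}
          = T'.deleteEdges {s(x, y)} := del_sup_edge_del hry hnadjH
      have hTadj : ((T'.deleteEdges {s(x, y)}) ⊔ edge r y).Adj r y := by
        rw [sup_adj, edge_adj]
        exact Or.inr ⟨Or.inl ⟨rfl, rfl⟩, hry⟩
      refine ⟨⟨htree, ?_⟩, hTadj, hx, ?_⟩
      · -- degree goes up by one
        have hnadj' : ¬ T'.Adj r y := by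
          intro h
          exact hnr (Adj.reachable ((del_edge_not_at_r_adj hrx hry).mpr h))
        have hNset : {w | ((T'.deleteEdges {s(x, y)}) ⊔ edge r y).Adj r w}
            = insert y {w | T'.Adj r w} := by
          ext w
          rw [Set.mem_setOf_eq, sup_adj, edge_adj, del_edge_not_at_r_adj hrx hry]
          simp only [Set.mem_insert_iff, Set.mem_setOf_eq]
          constructor
          · rintro (h | ⟨⟨-, rfl⟩ | ⟨h1, -⟩, -⟩)
            · exact Or.inr h
            · exact Or.inl rfl
            · exact absurd h1 hry
          · rintro (rfl | h)
            · exact Or.inr ⟨Or.inl (by tauto), hry⟩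
            · exact Or.inl h
        have hmem : y ∉ {w | T'.Adj r w} := hnadj'
        rw [dg_eq_ncard, hNset, Set.ncard_insert_of_notMem hmem (Set.toFinite _),
          ← dg_eq_ncard, hdeg']
      · rw [hdel]
        exact hrX⟩

lemma bwd_fwd (k : ℕ) (p : {p : SimpleGraph V × (V × V) // QB r k p}) :
    bwd k (fwd k p) = p := by
  obtain ⟨⟨T, y, x⟩, h⟩ := p
  obtain ⟨⟨hT, hdeg⟩, hadj, hx, hreach⟩ := h
  have hry : r ≠ y := hadj.ne
  have hbridge : ¬ (T.deleteEdges {s(r, y)}).Reachable r y := tree_not_reach hT hadj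
  have hxy : x ≠ y := by rintro rfl; exact hbridge hreach
  have hnadjH : ¬ (T.deleteEdges {s(r, y)}).Adj x y :=
    H_not_adj hT hadj hreach.symm (Reachable.refl y)
  apply Subtype.ext
  show ((((T.deleteEdges {s(r, y)}) ⊔ edge x y).deleteEdges {s(x, y)}) ⊔ edge r y, (y, x))
      = (T, (y, x))
  rw [del_sup_edge_del hxy hnadjH, del_sup_edge_self hadj]

lemma fwd_bwd (k : ℕ) (p : {p : SimpleGraph V × (V × V) // QA r k p}) :
    fwd k (bwd k p) = p := by
  obtain ⟨⟨T', x, y⟩, h⟩ := p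
  obtain ⟨⟨hT', hdeg'⟩, hadj', hx, hnr⟩ := h
  have hry : r ≠ y := by rintro rfl; exact hnr (Reachable.refl r)
  have hnadjH : ¬ (T'.deleteEdges {s(x, y)}).Adj r y := fun h => hnr h.reachable
  apply Subtype.ext
  show ((((T'.deleteEdges {s(x, y)}) ⊔ edge r y).deleteEdges {s(r, y)}) ⊔ edge x y, (x, y))
      = (T', (x, y))
  rw [del_sup_edge_del hry hnadjH, del_sup_edge_self hadj']

/-- the key recurrence -/
lemma recurrence (r : V) (k : ℕ) :
    Nat.card {G : SimpleGraph V // G.IsTree ∧ dg G r = k} * (Fintype.card V - 1 - k)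
    = Nat.card {G : SimpleGraph V // G.IsTree ∧ dg G r = k + 1}
        * ((Fintype.card V - 1) * k) := by
  have hA : Nat.card {p : SimpleGraph V × (V × V) // QA r k p}
      = Nat.card {G : SimpleGraph V // G.IsTree ∧ dg G r = k}
        * (Fintype.card V - 1 - k) := by
    have e : {p : SimpleGraph V × (V × V) // QA r k p}
        ≃ Σ G : {G : SimpleGraph V // G.IsTree ∧ dg G r = k},
          {q : V × V // G.1.Adj q.1 q.2 ∧ q.1 ≠ r ∧
            ¬ (G.1.deleteEdges {s(q.1, q.2)}).Reachable r q.2} :=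
      subtypeProdEquivSigma (α := SimpleGraph V) (β := V × V)
        (P := fun G => G.IsTree ∧ dg G r = k)
        (Q := fun G q => G.Adj q.1 q.2 ∧ q.1 ≠ r ∧
          ¬ (G.deleteEdges {s(q.1, q.2)}).Reachable r q.2)
    rw [Nat.card_congr e]
    exact nat_card_sigma_const _
      (fun G : {G : SimpleGraph V // G.IsTree ∧ dg G r = k} => factA G.2.1 G.2.2)
  have hB : Nat.card {p : SimpleGraph V × (V × V) // QB r k p}
      = Nat.card {G : SimpleGraph V // G.IsTree ∧ dg G r = k + 1}
        * ((Fintype.card V - 1) * k) := by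
    have e : {p : SimpleGraph V × (V × V) // QB r k p}
        ≃ Σ G : {G : SimpleGraph V // G.IsTree ∧ dg G r = k + 1},
          {q : V × V // G.1.Adj r q.1 ∧ q.2 ≠ r ∧
            (G.1.deleteEdges {s(r, q.1)}).Reachable r q.2} :=
      subtypeProdEquivSigma (α := SimpleGraph V) (β := V × V)
        (P := fun G => G.IsTree ∧ dg G r = k + 1)
        (Q := fun G q => G.Adj r q.1 ∧ q.2 ≠ r ∧
          (G.deleteEdges {s(r, q.1)}).Reachable r q.2)
    rw [Nat.card_congr e]
    exact nat_card_sigma_const _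
      (fun G : {G : SimpleGraph V // G.IsTree ∧ dg G r = k + 1} => factB G.2.1 G.2.2)
  rw [← hA, ← hB]
  exact Nat.card_congr ⟨bwd k, fwd k, fwd_bwd k, bwd_fwd k⟩

end Recurrence

section Main

variable [Fintype V]

lemma general_formula (r : V) : ∀ (m k : ℕ), 1 ≤ k → k ≤ Fintype.card V - 1 →
    Fintype.card V - 1 - k = m →
    Nat.card {G : SimpleGraph V // G.IsTree ∧ dg G r = k}
      = (Fintype.card V - 2).choose (k - 1)
        * (Fintype.card V - 1) ^ (Fintype.card V - 1 - k) := by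
  intro m
  induction m with
  | zero =>
    intro k hk1 hk2 hm
    have hk : k = Fintype.card V - 1 := by omega
    subst hk
    rw [base_count r]
    have h1 : Fintype.card V - 1 - 1 = Fintype.card V - 2 := by omega
    rw [h1, hm, Nat.choose_self, pow_zero]
    omega
  | succ m ih =>
    intro k hk1 hk2 hm
    have hcard : 2 ≤ Fintype.card V := by omega
    have hk2' : k + 1 ≤ Fintype.card V - 1 := by omega
    have hih := ih (k + 1) (by omega) hk2' (by omega)
    have hrec := recurrence (V := V) r k
    rw [hih] at hrec
    have hchoose : (Fintype.card V - 2).choose k * k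
        = (Fintype.card V - 2).choose (k - 1) * (Fintype.card V - 1 - k) := by
      have e1 : k - 1 + 1 = k := by omega
      have := Nat.choose_succ_right_eq (Fintype.card V - 2) (k - 1)
      rw [e1] at this
      rw [this]
      have e2 : Fintype.card V - 2 - (k - 1) = Fintype.card V - 1 - k := by omega
      rw [e2]
    have hpow : Fintype.card V - 1 - (k + 1) = m := by omega
    have hpow2 : Fintype.card V - 1 - k = m + 1 := hm
    have hsucc : k + 1 - 1 = k := by omega
    rw [hsucc, hpow] at hrec
    rw [hpow2] at hrec ⊢
    -- hrec : t_k * (m+1) = C(n-2,k) * (n-1)^m * ((n-1) * k)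
    have hrhs : (Fintype.card V - 2).choose k * (Fintype.card V - 1) ^ m
        * ((Fintype.card V - 1) * k)
        = ((Fintype.card V - 2).choose (k - 1) * (Fintype.card V - 1) ^ (m + 1)) * (m + 1) := by
      have : (Fintype.card V - 2).choose k * (Fintype.card V - 1) ^ m
          * ((Fintype.card V - 1) * k)
          = ((Fintype.card V - 2).choose k * k) * ((Fintype.card V - 1) ^ m
            * (Fintype.card V - 1)) := by ring
      rw [this, hchoose, hpow2, pow_succ]
      ring
    rw [hrhs] at hrec
    exact Nat.eq_of_mul_eq_mul_right (Nat.succ_pos m) hrec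

end Main

end CayleyAux

/-- Degree-conditioned Cayley formula: the number of labeled trees on `{1,…,n}` in which
vertex 1 has degree `k` is `C(n-2, k-1) · (n-1)^(n-1-k)`. -/
theorem count_trees_degree_of_vertex_one (n k : ℕ) (hn : 2 ≤ n) (hk : 1 ≤ k)
    (hkn : k ≤ n - 1) :
    Nat.card {G : SimpleGraph (Fin n) //
        G.IsTree ∧ Nat.card {w // G.Adj ⟨0, by omega⟩ w} = k} =
      Nat.choose (n - 2) (k - 1) * (n - 1) ^ (n - 1 - k) := by
  have hcard : Fintype.card (Fin n) = n := Fintype.card_fin n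
  have := CayleyAux.general_formula (V := Fin n) ⟨0, by omega⟩
    (Fintype.card (Fin n) - 1 - k) k hk (by rw [hcard]; omega) rfl
  simp only [Fintype.card_fin] at this
  exact this
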